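/- Let k be a real constant and let f be a C² real function on an open interval I ⊆ (0,∞). If the surface of revolution a = f(ρ) in the affine-additive group has constant horizontal Gauss curvature k on I, i.e., 4(2ρ f''(ρ)(2(ρ²+1)f'(ρ) − 1) − 4 f'(ρ)² + 4 f'(ρ) − 1) = k·(4(ρ²+1)f'(ρ)² − 4 f'(ρ) + 1)² for all ρ ∈ I, then there exists a constant c ∈ ℝ such that for all ρ ∈ I: (c − (k/4)ρ²)·((2(ρ²+1)f'(ρ) − 1)² + ρ²) = ρ²(ρ² + 1). -/

import Mathlib

/-- First integral of the constant horizontal Gauss curvature equation for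
surfaces of revolution `a = f(ρ)` in the affine-additive group. -/
theorem aa_constant_horizontal_gauss_curvature
    (k : ℝ) (a b : ℝ) (ha : 0 ≤ a) (f : ℝ → ℝ)
    (hf : ContDiffOn ℝ 2 f (Set.Ioo a b))
    (hK : ∀ ρ ∈ Set.Ioo a b,
      4 * (2 * ρ * deriv (deriv f) ρ * (2 * (ρ ^ 2 + 1) * deriv f ρ - 1) -
          4 * (deriv f ρ) ^ 2 + 4 * deriv f ρ - 1) =
        k * (4 * (ρ ^ 2 + 1) * (deriv f ρ) ^ 2 - 4 * deriv f ρ + 1) ^ 2) :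
    ∃ c : ℝ, ∀ ρ ∈ Set.Ioo a b,
      (c - (k / 4) * ρ ^ 2) *
          ((2 * (ρ ^ 2 + 1) * deriv f ρ - 1) ^ 2 + ρ ^ 2) =
        ρ ^ 2 * (ρ ^ 2 + 1) := by
  rcases Set.eq_empty_or_nonempty (Set.Ioo a b) with h | ⟨ρ₀, hρ₀⟩
  · exact ⟨0, fun ρ hρ => absurd hρ (h ▸ Set.notMem_empty ρ)⟩
  set g : ℝ → ℝ := fun ρ =>
    ρ ^ 2 / (4 * (ρ ^ 2 + 1) * (deriv f ρ) ^ 2 - 4 * deriv f ρ + 1) + (k / 4) * ρ ^ 2 with hg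
  -- positivity of D
  have hpos : ∀ ρ ∈ Set.Ioo a b,
      0 < 4 * (ρ ^ 2 + 1) * (deriv f ρ) ^ 2 - 4 * deriv f ρ + 1 := by
    intro ρ hρ
    have hρpos : 0 < ρ := lt_of_le_of_lt ha hρ.1
    have key : 4 * (ρ ^ 2 + 1) * (deriv f ρ) ^ 2 - 4 * deriv f ρ + 1 =
        (2 * ρ * deriv f ρ) ^ 2 + (2 * deriv f ρ - 1) ^ 2 := by ring
    rw [key]
    rcases eq_or_ne (deriv f ρ) (1/2) with h | h
    · have : (2 * ρ * deriv f ρ) ^ 2 > 0 := by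
        positivity
      nlinarith [sq_nonneg (2 * deriv f ρ - 1)]
    · have h2 : 2 * deriv f ρ - 1 ≠ 0 := by
        intro hc; apply h; linarith
      have : (2 * deriv f ρ - 1) ^ 2 > 0 := by positivity
      nlinarith [sq_nonneg (2 * ρ * deriv f ρ)]
  -- deriv f has derivative deriv (deriv f) on the interval
  have hd1 : ContDiffOn ℝ 1 (deriv f) (Set.Ioo a b) := by
    exact hf.deriv_of_isOpen (m := 1) isOpen_Ioo (by norm_num)
  have hdf : ∀ ρ ∈ Set.Ioo a b, HasDerivAt (deriv f) (deriv (deriv f) ρ) ρ := by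
    intro ρ hρ
    have : DifferentiableAt ℝ (deriv f) ρ :=
      (hd1.differentiableOn one_ne_zero).differentiableAt (isOpen_Ioo.mem_nhds hρ)
    exact this.hasDerivAt
  -- g has derivative 0 on the interval
  have hg0 : ∀ ρ ∈ Set.Ioo a b, HasDerivAt g 0 ρ := by
    intro ρ hρ
    have hu := hdf ρ hρ
    set u := deriv f ρ
    set u' := deriv (deriv f) ρ
    have hD := (hpos ρ hρ).ne'
    have hnum : HasDerivAt (fun ρ => ρ ^ 2) (2 * ρ) ρ := by
      simpa using (hasDerivAt_pow 2 ρ)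
    have hden : HasDerivAt (fun ρ => 4 * (ρ ^ 2 + 1) * (deriv f ρ) ^ 2 - 4 * deriv f ρ + 1)
        (4 * (2 * ρ) * u ^ 2 + 4 * (ρ ^ 2 + 1) * (2 * u * u') - 4 * u') ρ := by
      have h1 : HasDerivAt (fun ρ => 4 * (ρ ^ 2 + 1)) (4 * (2 * ρ)) ρ :=
        ((hnum.add_const 1).const_mul 4)
      have h2 : HasDerivAt (fun ρ => (deriv f ρ) ^ 2) (2 * u * u') ρ := by
        simpa [Pi.pow_def, mul_comm, mul_assoc, mul_left_comm] using (hu.pow 2)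
      have := (h1.mul h2).sub (hu.const_mul 4)
      simpa [mul_comm, mul_assoc, mul_left_comm, add_comm, sub_add_eq_add_sub] using
        this.add_const 1
    have hdiv := (hnum.div hden hD).add ((hnum.const_mul (k/4)))
    convert hdiv using 1
    · rfl
    · rfl
    · rfl
    have hODE := hK ρ hρ
    rw [div_add' _ _ _ (pow_ne_zero 2 hD), eq_div_iff (pow_ne_zero 2 hD)]
    linear_combination (ρ/2) * hODE
  -- g is constant on Ioo a b
  have hconst : ∀ ρ ∈ Set.Ioo a b, g ρ = g ρ₀ := by
    intro ρ hρ
    apply (convex_Ioo a b).is_const_of_fderivWithin_eq_zero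
      (fun x hx => ((hg0 x hx).differentiableAt.differentiableWithinAt)) _ hρ hρ₀
    intro x hx
    rw [fderivWithin_eq_fderiv (isOpen_Ioo.uniqueDiffWithinAt hx)
      (hg0 x hx).differentiableAt]
    ext
    simp [(hg0 x hx).deriv, ← (hg0 x hx).differentiableAt.hasDerivAt.deriv,
      ← toSpanSingleton_deriv]
  refine ⟨g ρ₀, fun ρ hρ => ?_⟩
  have hD := (hpos ρ hρ).ne'
  have h1 : g ρ = g ρ₀ := hconst ρ hρ
  have h2 : g ρ₀ - (k / 4) * ρ ^ 2 = ρ ^ 2 / (4 * (ρ ^ 2 + 1) * (deriv f ρ) ^ 2 - 4 * deriv f ρ + 1) := by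
    rw [← h1]; simp [hg]
  rw [h2]
  have hz : (2 * (ρ ^ 2 + 1) * deriv f ρ - 1) ^ 2 + ρ ^ 2 =
      (ρ ^ 2 + 1) * (4 * (ρ ^ 2 + 1) * (deriv f ρ) ^ 2 - 4 * deriv f ρ + 1) := by ring
  rw [hz]
  rw [div_mul_eq_mul_div, div_eq_iff hD]
  ring
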